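/- arXiv:2005.05042 — 2 statements merged into one kernel-verified Lean document; each statement's English description precedes it below -/
import Mathlib

section
/- Let k ≥ 1 be an integer and let G be a finite simple graph on n vertices such that no induced subgraph of G is an immature k-creature. Then G has at most k^2 · n^(2k-2) minimal separators. -/
namespace Paper

open SimpleGraph

variable {V : Type*}

/-- The set of neighbors of `v` inside the set `H`. -/
def nbrsIn (G : SimpleGraph V) (v : V) (H : Set V) : Set V :=
  {u | u ∈ H ∧ G.Adj v u}

/-- The vertex set of a walk. -/
def supp {G : SimpleGraph V} {a b : V} (P : G.Walk a b) : Set V :=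
  {v | v ∈ P.support}

/-- `H` is a hole of `G`: an induced cycle of length at least 4.  (A finite
graph is a cycle iff it is connected and `2`-regular.) -/
def IsHole (G : SimpleGraph V) (H : Set V) : Prop :=
  H.Finite ∧ 4 ≤ H.ncard ∧ (G.induce H).Connected ∧
    ∀ v ∈ H, (nbrsIn G v H).ncard = 2

/-- `G` contains a theta as an induced subgraph. -/
def HasTheta (G : SimpleGraph V) : Prop :=
  ∃ (a b : V) (P₁ P₂ P₃ : G.Walk a b),
    a ≠ b ∧ ¬ G.Adj a b ∧
    P₁.IsPath ∧ P₂.IsPath ∧ P₃.IsPath ∧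
    2 ≤ P₁.length ∧ 2 ≤ P₂.length ∧ 2 ≤ P₃.length ∧
    (∀ v, v ∈ P₁.support → v ∈ P₂.support → v = a ∨ v = b) ∧
    (∀ v, v ∈ P₁.support → v ∈ P₃.support → v = a ∨ v = b) ∧
    (∀ v, v ∈ P₂.support → v ∈ P₃.support → v = a ∨ v = b) ∧
    IsHole G (supp P₁ ∪ supp P₂) ∧
    IsHole G (supp P₁ ∪ supp P₃) ∧
    IsHole G (supp P₂ ∪ supp P₃)

/-- `G` contains a pyramid as an induced subgraph. -/
def HasPyramid (G : SimpleGraph V) : Prop :=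
  ∃ (a b₁ b₂ b₃ : V) (P₁ : G.Walk a b₁) (P₂ : G.Walk a b₂) (P₃ : G.Walk a b₃),
    G.Adj b₁ b₂ ∧ G.Adj b₂ b₃ ∧ G.Adj b₁ b₃ ∧
    P₁.IsPath ∧ P₂.IsPath ∧ P₃.IsPath ∧
    (∀ v, v ∈ P₁.support → v ∈ P₂.support → v = a) ∧
    (∀ v, v ∈ P₁.support → v ∈ P₃.support → v = a) ∧
    (∀ v, v ∈ P₂.support → v ∈ P₃.support → v = a) ∧
    ¬ (P₁.length = 1 ∧ P₂.length = 1) ∧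
    ¬ (P₁.length = 1 ∧ P₃.length = 1) ∧
    ¬ (P₂.length = 1 ∧ P₃.length = 1) ∧
    IsHole G (supp P₁ ∪ supp P₂) ∧
    IsHole G (supp P₁ ∪ supp P₃) ∧
    IsHole G (supp P₂ ∪ supp P₃)

/-- `G` contains a prism as an induced subgraph. -/
def HasPrism (G : SimpleGraph V) : Prop :=
  ∃ (a₁ a₂ a₃ b₁ b₂ b₃ : V) (P₁ : G.Walk a₁ b₁) (P₂ : G.Walk a₂ b₂)
      (P₃ : G.Walk a₃ b₃),
    G.Adj a₁ a₂ ∧ G.Adj a₂ a₃ ∧ G.Adj a₁ a₃ ∧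
    G.Adj b₁ b₂ ∧ G.Adj b₂ b₃ ∧ G.Adj b₁ b₃ ∧
    P₁.IsPath ∧ P₂.IsPath ∧ P₃.IsPath ∧
    (∀ v, v ∈ P₁.support → v ∉ P₂.support) ∧
    (∀ v, v ∈ P₁.support → v ∉ P₃.support) ∧
    (∀ v, v ∈ P₂.support → v ∉ P₃.support) ∧
    IsHole G (supp P₁ ∪ supp P₂) ∧
    IsHole G (supp P₁ ∪ supp P₃) ∧
    IsHole G (supp P₂ ∪ supp P₃)

/-- `G` contains a turtle as an induced subgraph. -/
def HasTurtle (G : SimpleGraph V) : Prop :=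
  ∃ (a₁ b₁ a₂ b₂ x y : V) (P₁ : G.Walk a₁ b₁) (P₂ : G.Walk a₂ b₂),
    P₁.IsPath ∧ P₂.IsPath ∧
    (∀ v, v ∈ P₁.support → v ∉ P₂.support) ∧
    G.Adj a₁ a₂ ∧ G.Adj b₁ b₂ ∧ G.Adj x y ∧
    x ∉ P₁.support ∧ x ∉ P₂.support ∧ y ∉ P₁.support ∧ y ∉ P₂.support ∧
    IsHole G (supp P₁ ∪ supp P₂) ∧
    3 ≤ (nbrsIn G x (supp P₁)).ncard ∧
    (∀ v ∈ P₂.support, ¬ G.Adj x v) ∧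
    3 ≤ (nbrsIn G y (supp P₂)).ncard ∧
    (∀ v ∈ P₁.support, ¬ G.Adj y v)

/-- `G` contains no theta, pyramid, prism, or turtle as an induced subgraph. -/
def TPPTFree (G : SimpleGraph V) : Prop :=
  ¬ HasTheta G ∧ ¬ HasPyramid G ∧ ¬ HasPrism G ∧ ¬ HasTurtle G

/-- The neighborhood of a set `X`: all vertices outside `X` with a neighbor in `X`. -/
def setNbrs (G : SimpleGraph V) (X : Set V) : Set V :=
  {v | v ∉ X ∧ ∃ x ∈ X, G.Adj x v}

/-- `A` is a connected component of `G ∖ C`. -/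
def IsCompOf (G : SimpleGraph V) (C A : Set V) : Prop :=
  A.Nonempty ∧ Disjoint A C ∧ (G.induce A).Connected ∧
    ∀ a ∈ A, ∀ b : V, G.Adj a b → b ∉ C → b ∈ A

/-- `C` is a minimal separator of `G`: there are two distinct components `L`, `R`
of `G ∖ C` with `N(L) = N(R) = C`. -/
def IsMinSep (G : SimpleGraph V) (C : Set V) : Prop :=
  ∃ L R : Set V, IsCompOf G C L ∧ IsCompOf G C R ∧ L ≠ R ∧
    setNbrs G L = C ∧ setNbrs G R = C

/-- A proper separator: a minimal separator that is not a clique. -/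
def IsProperSep (G : SimpleGraph V) (C : Set V) : Prop :=
  IsMinSep G C ∧ ¬ (∀ a ∈ C, ∀ b ∈ C, a ≠ b → G.Adj a b)

/-- `u` is a minor vertex for the hole `H`: `u ∉ H`, `u` has a neighbor in `H` and
all its neighbors in `H` lie in a path of `H` with at most three vertices. -/
def IsMinorFor (G : SimpleGraph V) (u : V) (H : Set V) : Prop :=
  u ∉ H ∧ (nbrsIn G u H).Nonempty ∧
    ∃ a b c : V, a ∈ H ∧ b ∈ H ∧ c ∈ H ∧ G.Adj a b ∧ G.Adj b c ∧ a ≠ c ∧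
      nbrsIn G u H ⊆ {a, b, c}

/-- `u` is a major vertex for the hole `H`. -/
def IsMajorFor (G : SimpleGraph V) (u : V) (H : Set V) : Prop :=
  u ∉ H ∧ (nbrsIn G u H).Nonempty ∧ ¬ IsMinorFor G u H

/-- `u` is a pendant of `H`: it has a unique neighbor in `H`. -/
def IsPendant (G : SimpleGraph V) (u : V) (H : Set V) : Prop :=
  u ∉ H ∧ ∃ a : V, nbrsIn G u H = {a}

/-- `u` is a cap of `H`: it has exactly two neighbors in `H` and they are adjacent. -/
def IsCap (G : SimpleGraph V) (u : V) (H : Set V) : Prop :=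
  u ∉ H ∧ ∃ a b : V, a ≠ b ∧ G.Adj a b ∧ nbrsIn G u H = {a, b}

/-- `u` is a clone of `y` in `H`: its neighbors in `H` are exactly the three
vertices of a path `x-y-z` of `H`. -/
def IsCloneOf (G : SimpleGraph V) (u y : V) (H : Set V) : Prop :=
  u ∉ H ∧ ∃ x z : V, x ∈ H ∧ y ∈ H ∧ z ∈ H ∧ G.Adj x y ∧ G.Adj y z ∧ x ≠ z ∧
    nbrsIn G u H = {x, y, z}

/-- `u` is a clone (of some vertex) in `H`. -/
def IsClone (G : SimpleGraph V) (u : V) (H : Set V) : Prop :=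
  ∃ y, IsCloneOf G u y H

/-- `P` is a `u`-sector of the hole `H`: a path contained in `H` whose ends are
neighbors of `u` and whose interior is anticomplete to `u`. -/
def IsSector (G : SimpleGraph V) (u : V) (H : Set V) {a b : V} (P : G.Walk a b) : Prop :=
  P.IsPath ∧ (∀ v ∈ P.support, v ∈ H) ∧ G.Adj u a ∧ G.Adj u b ∧
    ∀ v ∈ P.support, v ≠ a → v ≠ b → ¬ G.Adj u v

/-- `u` and `v` are nested with respect to the hole `H`: there are distinct
`a, b ∈ H` such that one `ab`-path of `H` contains all neighbors of `u` in `H`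
and the other `ab`-path of `H` contains all neighbors of `v` in `H`. -/
def Nested (G : SimpleGraph V) (u v : V) (H : Set V) : Prop :=
  ∃ a b : V, a ∈ H ∧ b ∈ H ∧ a ≠ b ∧
    ∃ (P Q : G.Walk a b), P.IsPath ∧ Q.IsPath ∧
      supp P ∪ supp Q = H ∧
      (∀ x, x ∈ P.support → x ∈ Q.support → x = a ∨ x = b) ∧
      (∀ x ∈ H, G.Adj u x → x ∈ P.support) ∧
      (∀ x ∈ H, G.Adj v x → x ∈ Q.support)

/-- `u` is a hub for the hole `H`: its neighbors in `H` are exactly four vertices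
`p, q, r, s` appearing in that order along `H`, with `pq, rs ∈ E(G)` and
`ps, qr ∉ E(G)`. -/
def IsHub (G : SimpleGraph V) (u : V) (H : Set V) : Prop :=
  u ∉ H ∧ ∃ (p q r s : V) (A : G.Walk q r) (B : G.Walk s p),
    p ≠ q ∧ p ≠ r ∧ p ≠ s ∧ q ≠ r ∧ q ≠ s ∧ r ≠ s ∧
    nbrsIn G u H = {p, q, r, s} ∧
    G.Adj p q ∧ G.Adj r s ∧ ¬ G.Adj p s ∧ ¬ G.Adj q r ∧
    A.IsPath ∧ B.IsPath ∧
    (∀ v, v ∈ A.support → v ∉ B.support) ∧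
    supp A ∪ supp B = H

/-- `N` is an extended neighborhood of `w` in the hole `H`. -/
def IsExtNbhd (G : SimpleGraph V) (w : V) (H N : Set V) : Prop :=
  ∃ (x y x' y' : V) (Q : G.Walk x y),
    IsSector G w H Q ∧
    x' ∈ H ∧ x' ∉ Q.support ∧ G.Adj x' x ∧
    y' ∈ H ∧ y' ∉ Q.support ∧ G.Adj y' y ∧
    N = supp Q ∪ ({x', y'} ∩ nbrsIn G w H)

/-- `a` and `b` are distant in `H` with respect to `w`: no extended neighborhood
of `w` in `H` contains both `a` and `b`. -/
def Distant (G : SimpleGraph V) (w : V) (H : Set V) (a b : V) : Prop :=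
  a ∈ H ∧ b ∈ H ∧ ∀ N : Set V, IsExtNbhd G w H N → ¬ (a ∈ N ∧ b ∈ N)

/-- `P` is an `(H, w)`-significant path. -/
def IsSignificant (G : SimpleGraph V) (w : V) (H : Set V) {p q : V}
    (P : G.Walk p q) : Prop :=
  P.IsPath ∧ ∃ a b : V, a ∈ H ∧ G.Adj p a ∧ ¬ G.Adj w a ∧ b ∈ H ∧ G.Adj q b ∧
    Distant G w H a b

/-- `v` is a gem-center for the hole `H`. -/
def IsGemCenter (G : SimpleGraph V) (v : V) (H : Set V) : Prop :=
  5 ≤ H.ncard ∧ ∃ h₁ h₂ h₃ h₄ : V, h₁ ∈ H ∧ h₂ ∈ H ∧ h₃ ∈ H ∧ h₄ ∈ H ∧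
    G.Adj h₁ h₂ ∧ G.Adj h₂ h₃ ∧ G.Adj h₃ h₄ ∧ h₁ ≠ h₃ ∧ h₁ ≠ h₄ ∧ h₂ ≠ h₄ ∧
    nbrsIn G v H = {h₁, h₂, h₃, h₄}

/-- `x` is the center of a star cutset of `G`. -/
def IsStarCutsetCenter (G : SimpleGraph V) (x : V) : Prop :=
  ∃ X : Set V, x ∈ X ∧ (∀ y ∈ X, y ≠ x → G.Adj x y) ∧
    ¬ (G.induce (Xᶜ)).Preconnected

/-- `v` is `(c₁, c₂)`-heavy with respect to the hole `H`. -/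
def IsHeavy (G : SimpleGraph V) (c₁ c₂ : V) (H : Set V) (v : V) : Prop :=
  IsMajorFor G v H ∧ Distant G v H c₁ c₂

/-- The pair of paths `HL`, `HR` forms a `(C, c₁, c₂)`-hole with frame
`(c₁, c₂, ℓ₁', ℓ₁, r₁, r₁', ℓ₂', ℓ₂, r₂, r₂')`, where `L` and `R` are the two
full components of the proper separator `C`. -/
def IsCHoleWithFrame (G : SimpleGraph V) (C L R : Set V)
    (c₁ c₂ ℓ₁ ℓ₁' ℓ₂ ℓ₂' r₁ r₁' r₂ r₂' : V) (HL HR : G.Walk c₁ c₂) : Prop :=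
  HL.IsPath ∧ HR.IsPath ∧
  (∀ v, v ∈ HL.support → v ∈ HR.support → v = c₁ ∨ v = c₂) ∧
  IsHole G (supp HL ∪ supp HR) ∧
  c₁ ∈ C ∧ c₂ ∈ C ∧
  (∀ v, v ∈ HL.support → v ≠ c₁ → v ≠ c₂ → v ∈ L) ∧
  (∀ v, v ∈ HR.support → v ≠ c₁ → v ≠ c₂ → v ∈ R) ∧
  (supp HL ∪ supp HR) ∩ C = {c₁, c₂} ∧
  ℓ₁ ∈ HL.support ∧ ℓ₁ ≠ c₂ ∧ G.Adj c₁ ℓ₁ ∧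
  ℓ₂ ∈ HL.support ∧ ℓ₂ ≠ c₁ ∧ G.Adj c₂ ℓ₂ ∧
  r₁ ∈ HR.support ∧ r₁ ≠ c₂ ∧ G.Adj c₁ r₁ ∧
  r₂ ∈ HR.support ∧ r₂ ≠ c₁ ∧ G.Adj c₂ r₂ ∧
  ((ℓ₁ = ℓ₂ ∧ ℓ₁' = ℓ₁) ∨
    (ℓ₁ ≠ ℓ₂ ∧ ℓ₁' ∈ HL.support ∧ ℓ₁' ≠ c₁ ∧ ℓ₁' ≠ c₂ ∧ G.Adj ℓ₁ ℓ₁')) ∧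
  ((ℓ₁ = ℓ₂ ∧ ℓ₂' = ℓ₂) ∨
    (ℓ₁ ≠ ℓ₂ ∧ ℓ₂' ∈ HL.support ∧ ℓ₂' ≠ c₁ ∧ ℓ₂' ≠ c₂ ∧ G.Adj ℓ₂ ℓ₂')) ∧
  ((r₁ = r₂ ∧ r₁' = r₁) ∨
    (r₁ ≠ r₂ ∧ r₁' ∈ HR.support ∧ r₁' ≠ c₁ ∧ r₁' ≠ c₂ ∧ G.Adj r₁ r₁')) ∧
  ((r₁ = r₂ ∧ r₂' = r₂) ∨
    (r₁ ≠ r₂ ∧ r₂' ∈ HR.support ∧ r₂' ≠ c₁ ∧ r₂' ≠ c₂ ∧ G.Adj r₂ r₂'))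

/-- The 3-dimensional hypercube graph: vertices are elements of `{0,1}³`, two
vertices being adjacent exactly when they differ in one coordinate. -/
def cubeGraph : SimpleGraph (Fin 3 → Bool) where
  Adj x y := ∃! i, x i ≠ y i
  symm := by
    constructor
    rintro x y ⟨i, hi, hj⟩
    exact ⟨i, Ne.symm hi, fun j h => hj j (Ne.symm h)⟩
  loopless := by
    constructor
    rintro x ⟨i, hi, -⟩
    exact hi rfl

/-- If `k ≥ 1` and no induced subgraph of the finite simple graph `G` is an
immature `k`-creature, then `G` has at most `k² · n^(2k-2)` minimal
separators, where `n = |V(G)|`. -/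
theorem minSep_bound_of_no_immature_creature {V : Type*} [Fintype V]
    (G : SimpleGraph V) (k : ℕ) (hk : 1 ≤ k)
    (h : ¬ ∃ x y : Fin k → V, Function.Injective x ∧ Function.Injective y ∧
        (∀ i j, x i ≠ y j) ∧ ∀ i j, (G.Adj (x i) (y j) ↔ i = j)) :
    {C : Set V | IsMinSep G C}.ncard ≤ k ^ 2 * Fintype.card V ^ (2 * k - 2) := by
  classical
  by_cases hne : {C : Set V | IsMinSep G C}.Nonempty
  case neg =>
    rw [Set.not_nonempty_iff_eq_empty] at hne
    simp [hne]
  obtain ⟨C0, hC0⟩ := hne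
  obtain ⟨L0, R0, hL0, -, -, -, -⟩ := hC0
  obtain ⟨v0, -⟩ := hL0.1
  -- two components sharing a vertex: one contained in the other
  have compSub : ∀ (C A B : Set V), IsCompOf G C A → IsCompOf G C B →
      ∀ x, x ∈ A → x ∈ B → A ⊆ B := by
    intro C A B hA hB x hxA hxB a haA
    obtain ⟨w⟩ := hA.2.2.1.preconnected ⟨x, hxA⟩ ⟨a, haA⟩
    have main : ∀ (u v : ↥A) (w : (G.induce A).Walk u v), (u : V) ∈ B → (v : V) ∈ B := by
      intro u v w
      induction w with
      | nil => exact id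
      | @cons u u' v hadj p ih =>
        intro hu
        have hGadj : G.Adj (u : V) (u' : V) := hadj
        have hu'C : (u' : V) ∉ C := Set.disjoint_left.mp hA.2.1 u'.2
        exact ih (hB.2.2.2 (u : V) hu (u' : V) hGadj hu'C)
    exact main _ _ w hxB
  have disjComp : ∀ (C A B : Set V), IsCompOf G C A → IsCompOf G C B → A ≠ B →
      ∀ v, v ∈ A → v ∈ B → False := by
    intro C A B hA hB hAB v hvA hvB
    exact hAB (Set.Subset.antisymm (compSub C A B hA hB v hvA hvB)
      (compSub C B A hB hA v hvB hvA))
  -- key lemma: a full component has a small dominating set of C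
  have key : ∀ (C A : Set V), IsCompOf G C A → setNbrs G A = C →
      ∃ S : Finset V, ↑S ⊆ A ∧ S.card < k ∧ C ⊆ {v | ∃ x ∈ S, G.Adj x v} := by
    intro C A hA hNA
    set fam : Finset (Finset V) :=
      Finset.univ.filter (fun S => ↑S ⊆ A ∧ C ⊆ {v | ∃ x ∈ S, G.Adj x v}) with hfam
    have hmemfam : ∀ S : Finset V,
        S ∈ fam ↔ ↑S ⊆ A ∧ C ⊆ {v | ∃ x ∈ S, G.Adj x v} := by
      intro S; simp [hfam]
    have hAfin : (Set.toFinite A).toFinset ∈ fam := by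
      rw [hmemfam]
      constructor
      · rw [Set.Finite.coe_toFinset]
      · intro c hc
        rw [← hNA] at hc
        obtain ⟨-, x, hxA, hadj⟩ := hc
        exact ⟨x, by simpa using hxA, hadj⟩
    obtain ⟨S, hSfam, hSmin⟩ := Finset.exists_min_image fam Finset.card ⟨_, hAfin⟩
    obtain ⟨hSA, hSC⟩ := (hmemfam S).mp hSfam
    refine ⟨S, hSA, ?_, hSC⟩
    by_contra hbig
    push_neg at hbig
    obtain ⟨T, hTS, hTcard⟩ := Finset.exists_subset_card_eq hbig
    -- private neighbors
    have priv : ∀ s ∈ S, ∃ c, c ∈ C ∧ G.Adj s c ∧ ∀ t ∈ S, G.Adj t c → t = s := by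
      intro s hs
      have herase : S.erase s ∉ fam := by
        intro hmem
        have h1 := hSmin _ hmem
        have h2 := Finset.card_erase_lt_of_mem hs
        omega
      rw [hmemfam] at herase
      push_neg at herase
      have hsub : ↑(S.erase s) ⊆ A := fun x hx => hSA (Finset.erase_subset s S hx)
      have hnsub := herase hsub
      rw [Set.not_subset] at hnsub
      obtain ⟨c, hcC, hc⟩ := hnsub
      obtain ⟨x, hxS, hxadj⟩ := hSC hcC
      have hxs : x = s := by
        by_contra hxne
        exact hc ⟨x, Finset.mem_erase.mpr ⟨hxne, hxS⟩, hxadj⟩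
      refine ⟨c, hcC, hxs ▸ hxadj, ?_⟩
      intro t htS htadj
      by_contra htne
      exact hc ⟨t, Finset.mem_erase.mpr ⟨htne, htS⟩, htadj⟩
    -- build an immature k-creature
    set xf : Fin k → V := fun i => ((Finset.equivFinOfCardEq hTcard).symm i : V) with hxf
    have hxfS : ∀ i, xf i ∈ S := fun i => hTS ((Finset.equivFinOfCardEq hTcard).symm i).2
    have hxfinj : Function.Injective xf := by
      intro i j hij
      exact (Finset.equivFinOfCardEq hTcard).symm.injective (Subtype.coe_injective hij)
    choose yf hyC hyadj hypriv using fun i => priv (xf i) (hxfS i)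
    apply h
    refine ⟨xf, yf, hxfinj, ?_, ?_, ?_⟩
    · intro i j hij
      have hadj : G.Adj (xf i) (yf j) := by rw [← hij]; exact hyadj i
      exact hxfinj (hypriv j (xf i) (hxfS i) hadj)
    · intro i j hEq
      have h1 : xf i ∈ A := hSA (hxfS i)
      have h2 : yf j ∉ A := by
        have := hyC j
        rw [← hNA] at this
        exact this.1
      exact h2 (hEq ▸ h1)
    · intro i j
      constructor
      · intro hadj
        exact hxfinj (hypriv j (xf i) (hxfS i) hadj)
      · rintro rfl
        exact hyadj i
  -- encoding of small finsets
  have encode : ∀ S : Finset V, S.card < k →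
      ∃ (s : Fin k) (f : Fin (k - 1) → V), (s : ℕ) = S.card ∧
        (∀ i : Fin (k - 1), (i : ℕ) < S.card → f i ∈ S) ∧
        (∀ x ∈ S, ∃ i : Fin (k - 1), (i : ℕ) < S.card ∧ f i = x) := by
    intro S hS
    refine ⟨⟨S.card, hS⟩,
      fun i => if hi : (i : ℕ) < S.card then (S.equivFin.symm ⟨i, hi⟩ : V) else v0,
      rfl, ?_, ?_⟩
    · intro i hi
      simp only [dif_pos hi]
      exact (S.equivFin.symm ⟨(i : ℕ), hi⟩).2
    · intro x hx
      have hj : ((S.equivFin ⟨x, hx⟩ : Fin S.card) : ℕ) < S.card :=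
        (S.equivFin ⟨x, hx⟩).2
      have hjK : ((S.equivFin ⟨x, hx⟩ : Fin S.card) : ℕ) < k - 1 := by omega
      refine ⟨⟨_, hjK⟩, hj, ?_⟩
      simp only [dif_pos hj]
      have heta : (⟨((S.equivFin ⟨x, hx⟩ : Fin S.card) : ℕ), hj⟩ : Fin S.card)
          = S.equivFin ⟨x, hx⟩ := by
        apply Fin.ext; rfl
      rw [heta, Equiv.symm_apply_apply]
  -- decoding map
  set D : (Fin k × (Fin (k - 1) → V)) × (Fin k × (Fin (k - 1) → V)) → Set V :=
    fun p => {v | (∃ i : Fin (k - 1), (i : ℕ) < (p.1.1 : ℕ) ∧ G.Adj (p.1.2 i) v) ∧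
                  (∃ i : Fin (k - 1), (i : ℕ) < (p.2.1 : ℕ) ∧ G.Adj (p.2.2 i) v)} with hD
  have hsub : {C : Set V | IsMinSep G C} ⊆ Set.range D := by
    intro C hC
    obtain ⟨L, R, hL, hR, hLR, hNL, hNR⟩ := hC
    obtain ⟨S, hSA, hSk, hSC⟩ := key C L hL hNL
    obtain ⟨T, hTA, hTk, hTC⟩ := key C R hR hNR
    obtain ⟨s, f, hs, hf1, hf2⟩ := encode S hSk
    obtain ⟨t, g, ht, hg1, hg2⟩ := encode T hTk
    refine ⟨((s, f), (t, g)), ?_⟩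
    ext v
    simp only [hD, Set.mem_setOf_eq]
    constructor
    · rintro ⟨⟨i, hi, hadj⟩, ⟨j, hj, hadj'⟩⟩
      rw [hs] at hi
      rw [ht] at hj
      have hx := hf1 i hi
      have hy := hg1 j hj
      by_contra hvC
      have hvL : v ∈ L := hL.2.2.2 (f i) (hSA hx) v hadj hvC
      have hvR : v ∈ R := hR.2.2.2 (g j) (hTA hy) v hadj' hvC
      exact disjComp C L R hL hR hLR v hvL hvR
    · intro hvC
      obtain ⟨x, hxS, hxadj⟩ := hSC hvC
      obtain ⟨y, hyT, hyadj⟩ := hTC hvC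
      obtain ⟨i, hi, hfi⟩ := hf2 x hxS
      obtain ⟨j, hj, hgj⟩ := hg2 y hyT
      exact ⟨⟨i, by rw [hs]; exact hi, by rw [hfi]; exact hxadj⟩,
             ⟨j, by rw [ht]; exact hj, by rw [hgj]; exact hyadj⟩⟩
  calc {C : Set V | IsMinSep G C}.ncard
      ≤ (Set.range D).ncard := Set.ncard_le_ncard hsub (Set.toFinite _)
    _ = (D '' Set.univ).ncard := by rw [Set.image_univ]
    _ ≤ (Set.univ : Set ((Fin k × (Fin (k - 1) → V)) × (Fin k × (Fin (k - 1) → V)))).ncard :=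
        Set.ncard_image_le (Set.toFinite _)
    _ = Fintype.card ((Fin k × (Fin (k - 1) → V)) × (Fin k × (Fin (k - 1) → V))) := by
        rw [Set.ncard_univ, Nat.card_eq_fintype_card]
    _ = k ^ 2 * Fintype.card V ^ (2 * k - 2) := by
        simp only [Fintype.card_prod, Fintype.card_fun, Fintype.card_fin]
        rw [show 2 * k - 2 = (k - 1) + (k - 1) from by omega, pow_add]
        ring


end Paper
end

section
/- Let G be a finite simple graph containing no theta, pyramid, prism, or turtle as an induced subgraph, and let H be a hole in G. Then every major vertex u for H has at least four neighbors in H, or has exactly three neighbors in H that are pairwise nonadjacent. -/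
namespace Paper

open SimpleGraph

variable {V : Type*}

section Aux

open SimpleGraph Walk

variable {G : SimpleGraph V} {H : Set V}

lemma nbrsIn_subset' (G : SimpleGraph V) (v : V) (H : Set V) : nbrsIn G v H ⊆ H :=
  fun _ hx => hx.1

lemma nbrs_pair (hH : IsHole G H) {v x y : V} (hv : v ∈ H)
    (hx : x ∈ nbrsIn G v H) (hy : y ∈ nbrsIn G v H) (hxy : x ≠ y) :
    nbrsIn G v H = {x, y} := by
  have hfin : (nbrsIn G v H).Finite := hH.1.subset (nbrsIn_subset' G v H)
  have hsub : ({x, y} : Set V) ⊆ nbrsIn G v H := by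
    intro z hz
    rcases hz with rfl | hz
    · exact hx
    · rw [Set.mem_singleton_iff] at hz; subst hz; exact hy
  exact (Set.eq_of_subset_of_ncard_le hsub
    (by rw [hH.2.2.2 v hv, Set.ncard_pair hxy]) hfin).symm

lemma exists_snd {x y : V} (P : G.Walk x y) (h : P.length ≠ 0) :
    ∃ (s : V) (e : G.Adj x s) (P' : G.Walk s y), P = Walk.cons e P' := by
  cases P with
  | nil => simp at h
  | cons e P' => exact ⟨_, e, P', rfl⟩

lemma eq_of_length_zero {x y : V} (P : G.Walk x y) (h : P.length = 0) : x = y := by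
  cases P with
  | nil => rfl
  | cons e P' => simp at h

lemma length_pos_of_ne {x y : V} (P : G.Walk x y) (h : x ≠ y) : P.length ≠ 0 :=
  fun h0 => h (eq_of_length_zero P h0)

lemma adj_of_length_one {x y : V} (P : G.Walk x y) (h : P.length = 1) : G.Adj x y := by
  cases P with
  | nil => simp at h
  | cons e P' =>
    have h0 : P'.length = 0 := by simpa using h
    exact (eq_of_length_zero P' h0) ▸ e

lemma nil_of_isPath_eq {x : V} {P : G.Walk x x} (h : P.IsPath) : P.length = 0 := by
  rw [(Walk.isPath_iff_eq_nil (p := P)).mp h]; rfl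

lemma two_le_length {x y : V} (P : G.Walk x y) (hne : x ≠ y) (hnadj : ¬ G.Adj x y) :
    2 ≤ P.length := by
  rcases Nat.lt_or_ge P.length 2 with h | h
  · exfalso
    have h0 := length_pos_of_ne P hne
    have h1 : P.length = 1 := by omega
    exact hnadj (adj_of_length_one P h1)
  · exact h

lemma snd_props {x y : V} {P : G.Walk x y} (hP : P.IsPath) (h2 : 2 ≤ P.length) :
    ∃ s, G.Adj x s ∧ s ∈ P.support ∧ s ≠ x ∧ s ≠ y := by
  obtain ⟨s, e, P', rfl⟩ := exists_snd P (by omega)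
  refine ⟨s, e, by simp, fun h => G.irrefl (h ▸ e), fun h => ?_⟩
  subst h
  have h0 := nil_of_isPath_eq hP.of_cons
  simp only [Walk.length_cons] at h2
  omega

lemma reachable_in_induce {S : Set V} :
    ∀ {a b : V} (Q : G.Walk a b), (∀ v ∈ Q.support, v ∈ S) →
      ∀ (ha : a ∈ S) (hb : b ∈ S), (G.induce S).Reachable ⟨a, ha⟩ ⟨b, hb⟩ := by
  intro a b Q
  induction Q with
  | nil =>
    intro _ ha hb
    exact Reachable.refl _
  | @cons a c b h q ih =>
    intro hsup ha hb
    have hc : c ∈ S := hsup c (by simp)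
    have hadj : (G.induce S).Adj ⟨a, ha⟩ ⟨c, hc⟩ := h
    exact hadj.reachable.trans (ih (fun v hv => hsup v (by simp [hv])) hc hb)

lemma walk_connected {S : Set V} {x y : V} (W : G.Walk x y)
    (h1 : ∀ v ∈ W.support, v ∈ S) (h2 : ∀ v ∈ S, v ∈ W.support) :
    (G.induce S).Connected := by
  have hx : x ∈ S := h1 x W.start_mem_support
  rw [connected_iff]
  refine ⟨?_, ⟨⟨x, hx⟩⟩⟩
  rintro ⟨p, hp⟩ ⟨q, hq⟩
  classical
  have key : ∀ (w : V) (hw : w ∈ S), (G.induce S).Reachable ⟨x, hx⟩ ⟨w, hw⟩ := by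
    intro w hw
    have hwW : w ∈ W.support := h2 w hw
    exact reachable_in_induce (W.takeUntil w hwW)
      (fun v hv => h1 v ((W.support_takeUntil_subset hwW) hv)) hx hw
  exact (key p hp).symm.trans (key q hq)

lemma supp_finite {a b : V} (P : G.Walk a b) : (supp P).Finite := P.support.finite_toSet

lemma ncard_supp {a b : V} {P : G.Walk a b} (hP : P.IsPath) :
    (supp P).ncard = P.length + 1 := by
  classical
  have h : supp P = ↑P.support.toFinset := by ext v; simp [supp]
  rw [h, Set.ncard_coe_finset, List.toFinset_card_of_nodup hP.support_nodup,
    Walk.length_support]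

lemma path_split [DecidableEq V] {x y v : V} {P : G.Walk x y} (hP : P.IsPath) (hv : v ∈ P.support) :
    ∀ w, w ∈ (P.takeUntil v hv).support → w ∈ (P.dropUntil v hv).support → w = v := by
  intro w hw1 hw2
  by_contra hne
  have hs := hP.support_nodup
  rw [← Walk.take_spec P hv, Walk.support_append] at hs
  have h2 : w ∈ (P.dropUntil v hv).support.tail := by
    have hcons := (P.dropUntil v hv).support_eq_cons
    rw [hcons] at hw2
    rcases List.mem_cons.mp hw2 with h | h
    · exact absurd h hne
    · exact h
  exact (List.disjoint_of_nodup_append hs) hw1 h2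

lemma interior_nbrs [DecidableEq V] (hH : IsHole G H) {x y v : V} {P : G.Walk x y}
    (hP : P.IsPath) (hPH : ∀ w ∈ P.support, w ∈ H) (hv : v ∈ P.support)
    (hvx : v ≠ x) (hvy : v ≠ y) :
    ∃ r s : V, nbrsIn G v H = {r, s} ∧ r ≠ s ∧ r ∈ P.support ∧ s ∈ P.support ∧
      ∀ (hadj : G.Adj x v), ∃ (D' : G.Walk v y), P = Walk.cons hadj D' := by
  have hTpath : (P.takeUntil v hv).IsPath := hP.takeUntil hv
  have hDpath : (P.dropUntil v hv).IsPath := hP.dropUntil hv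
  have hdisj := path_split hP hv
  have hvH : v ∈ H := hPH v hv
  have hTlen : (P.takeUntil v hv).reverse.length ≠ 0 := by
    rw [Walk.length_reverse]
    exact length_pos_of_ne _ (Ne.symm hvx)
  obtain ⟨r, er, R, hR⟩ := exists_snd (P.takeUntil v hv).reverse hTlen
  have hrT : r ∈ (P.takeUntil v hv).support := by
    have h1 : r ∈ (P.takeUntil v hv).reverse.support := by rw [hR]; simp
    rwa [Walk.support_reverse, List.mem_reverse] at h1
  have hrv : r ≠ v := fun h => G.irrefl (h ▸ er)
  have hDlen : (P.dropUntil v hv).length ≠ 0 := length_pos_of_ne _ hvy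
  obtain ⟨s, es, S2, hS⟩ := exists_snd (P.dropUntil v hv) hDlen
  have hsD : s ∈ (P.dropUntil v hv).support := by rw [hS]; simp
  have hsv : s ≠ v := fun h => G.irrefl (h ▸ es)
  have hrs : r ≠ s := by
    intro h
    subst h
    exact hrv (hdisj r hrT hsD)
  have hTsub : ∀ w ∈ (P.takeUntil v hv).support, w ∈ P.support :=
    fun w hw => (P.support_takeUntil_subset hv) hw
  have hDsub : ∀ w ∈ (P.dropUntil v hv).support, w ∈ P.support :=
    fun w hw => (P.support_dropUntil_subset hv) hw
  have hset : nbrsIn G v H = {r, s} :=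
    nbrs_pair hH hvH ⟨hPH r (hTsub r hrT), er⟩ ⟨hPH s (hDsub s hsD), es⟩ hrs
  refine ⟨r, s, hset, hrs, hTsub r hrT, hDsub s hsD, ?_⟩
  intro hadj
  have hxmem : x ∈ ({r, s} : Set V) := by
    rw [← hset]
    exact ⟨hPH x P.start_mem_support, hadj.symm⟩
  have hxs : x ≠ s := by
    intro h
    subst h
    exact hvx (hdisj x (P.takeUntil v hv).start_mem_support hsD).symm
  have hxr : x = r := by
    rcases hxmem with h | h
    · exact h
    · rw [Set.mem_singleton_iff] at h; exact absurd h hxs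
  subst hxr
  have hRpath : R.IsPath := by
    have h' := hTpath.reverse
    rw [hR] at h'
    exact h'.of_cons
  have hRnil : R.length = 0 := nil_of_isPath_eq hRpath
  have hReq : R = Walk.nil := by
    cases R with
    | nil => rfl
    | cons e R' => simp at hRnil
  have hTeq : P.takeUntil v hv = Walk.cons er.symm Walk.nil := by
    have h1 := congrArg Walk.reverse hR
    rw [Walk.reverse_reverse, hReq] at h1
    rw [h1]
    simp [Walk.reverse_cons]
  refine ⟨P.dropUntil v hv, ?_⟩
  have h2 := Walk.take_spec P hv
  rw [hTeq] at h2
  simp only [Walk.cons_append, Walk.nil_append] at h2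
  exact h2.symm

lemma cycle_split [DecidableEq V] {x b : V} {W : G.Walk x x} (hW : W.IsCycle)
    (hb : b ∈ W.support) (hbx : b ≠ x) :
    (W.takeUntil b hb).IsPath ∧ (W.dropUntil b hb).IsPath ∧
    (∀ v, v ∈ (W.takeUntil b hb).support → v ∈ (W.dropUntil b hb).support →
      v = x ∨ v = b) ∧
    (∀ v, v ∈ W.support ↔ v ∈ (W.takeUntil b hb).support ∨
      v ∈ (W.dropUntil b hb).support) := by
  have hspec : (W.takeUntil b hb).append (W.dropUntil b hb) = W := Walk.take_spec W hb
  have htail : W.support.tail.Nodup := hW.support_nodup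
  have hsupp : W.support = (W.takeUntil b hb).support ++ (W.dropUntil b hb).support.tail := by
    have h0 := congrArg Walk.support hspec
    rw [Walk.support_append] at h0
    exact h0.symm
  have h1 : x :: W.support.tail =
      x :: ((W.takeUntil b hb).support.tail ++ (W.dropUntil b hb).support.tail) := by
    rw [← W.support_eq_cons, hsupp, (W.takeUntil b hb).support_eq_cons]
    rfl
  have htl : W.support.tail =
      (W.takeUntil b hb).support.tail ++ (W.dropUntil b hb).support.tail := by
    have := congrArg List.tail h1
    simpa using this
  rw [htl] at htail
  rw [List.nodup_append] at htail
  obtain ⟨hnd1, hnd2, hdisj⟩ := htail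
  have hxD : x ∈ (W.dropUntil b hb).support.tail := by
    have hxe : x ∈ (W.dropUntil b hb).support := (W.dropUntil b hb).end_mem_support
    rw [(W.dropUntil b hb).support_eq_cons] at hxe
    rcases List.mem_cons.mp hxe with h | h
    · exact absurd h.symm hbx
    · exact h
  have hbT : b ∈ (W.takeUntil b hb).support.tail := by
    have hbe : b ∈ (W.takeUntil b hb).support := (W.takeUntil b hb).end_mem_support
    rw [(W.takeUntil b hb).support_eq_cons] at hbe
    rcases List.mem_cons.mp hbe with h | h
    · exact absurd h hbx
    · exact h
  have hTpath : (W.takeUntil b hb).IsPath := by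
    rw [Walk.isPath_def, (W.takeUntil b hb).support_eq_cons, List.nodup_cons]
    refine ⟨fun hx' => ?_, hnd1⟩
    exact hdisj _ hx' _ hxD rfl
  have hDpath : (W.dropUntil b hb).IsPath := by
    rw [Walk.isPath_def, (W.dropUntil b hb).support_eq_cons, List.nodup_cons]
    refine ⟨fun hb' => ?_, hnd2⟩
    exact hdisj _ hbT _ hb' rfl
  refine ⟨hTpath, hDpath, ?_, ?_⟩
  · intro v hv1 hv2
    by_contra hcon
    push_neg at hcon
    obtain ⟨hvx, hvb⟩ := hcon
    have hv1' : v ∈ (W.takeUntil b hb).support.tail := by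
      rw [(W.takeUntil b hb).support_eq_cons] at hv1
      rcases List.mem_cons.mp hv1 with h | h
      · exact absurd h hvx
      · exact h
    have hv2' : v ∈ (W.dropUntil b hb).support.tail := by
      rw [(W.dropUntil b hb).support_eq_cons] at hv2
      rcases List.mem_cons.mp hv2 with h | h
      · exact absurd h hvb
      · exact h
    exact hdisj _ hv1' _ hv2' rfl
  · intro v
    rw [hsupp, List.mem_append]
    constructor
    · rintro (h | h)
      · exact Or.inl h
      · refine Or.inr ?_
        rw [(W.dropUntil b hb).support_eq_cons]
        exact List.mem_cons_of_mem _ h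
    · rintro (h | h)
      · exact Or.inl h
      · rw [(W.dropUntil b hb).support_eq_cons] at h
        rcases List.mem_cons.mp h with rfl | h
        · exact Or.inl ((W.takeUntil v hb).end_mem_support)
        · exact Or.inr h

lemma arc_hole [DecidableEq V] (hH : IsHole G H) {u x y : V} (hu : u ∉ H) {Q : G.Walk x y}
    (hQ : Q.IsPath) (hQH : ∀ w ∈ Q.support, w ∈ H) (hlen : 2 ≤ Q.length)
    (hux : G.Adj u x) (huy : G.Adj u y)
    (hnbr : ∀ w ∈ Q.support, G.Adj u w → w = x ∨ w = y)
    {sx : V} (hsx : nbrsIn G x H ∩ supp Q = {sx})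
    {sy : V} (hsy : nbrsIn G y H ∩ supp Q = {sy}) :
    IsHole G (supp Q ∪ {u}) := by
  have hxy : x ≠ y := by
    intro h
    subst h
    have := nil_of_isPath_eq hQ
    omega
  have huQ : u ∉ supp Q := fun h => hu (hQH u h)
  have hfin : (supp Q).Finite := supp_finite Q
  have hsx' : sx ∈ nbrsIn G x H ∩ supp Q := by rw [hsx]; rfl
  have hsy' : sy ∈ nbrsIn G y H ∩ supp Q := by rw [hsy]; rfl
  refine ⟨hfin.union (Set.finite_singleton u), ?_, ?_, ?_⟩
  · rw [Set.union_singleton, Set.ncard_insert_of_notMem huQ hfin, ncard_supp hQ]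
    omega
  · refine walk_connected (Walk.cons hux Q) ?_ ?_
    · intro v hv
      rw [Walk.support_cons] at hv
      rcases List.mem_cons.mp hv with rfl | hv
      · exact Or.inr rfl
      · exact Or.inl hv
    · rintro v (hv | hv)
      · rw [Walk.support_cons]
        exact List.mem_cons_of_mem _ hv
      · rw [hv]
        exact (Walk.cons hux Q).start_mem_support
  · rintro v (hv | hv)
    · by_cases hvx : v = x
      · subst hvx
        have heq : nbrsIn G v (supp Q ∪ {u}) = {sx, u} := by
          ext w
          constructor
          · rintro ⟨hwS, hadj⟩
            rcases hwS with hwQ | hwu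
            · have : w ∈ nbrsIn G v H ∩ supp Q := ⟨⟨hQH w hwQ, hadj⟩, hwQ⟩
              rw [hsx] at this
              exact Or.inl this
            · exact Or.inr hwu
          · rintro (rfl | hw)
            · exact ⟨Or.inl hsx'.2, hsx'.1.2⟩
            · rw [Set.mem_singleton_iff] at hw
              subst hw
              exact ⟨Or.inr rfl, hux.symm⟩
        rw [heq, Set.ncard_pair (fun h => hu (by rw [← h]; exact hsx'.1.1))]
      · by_cases hvy : v = y
        · subst hvy
          have heq : nbrsIn G v (supp Q ∪ {u}) = {sy, u} := by
            ext w
            constructor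
            · rintro ⟨hwS, hadj⟩
              rcases hwS with hwQ | hwu
              · have : w ∈ nbrsIn G v H ∩ supp Q := ⟨⟨hQH w hwQ, hadj⟩, hwQ⟩
                rw [hsy] at this
                exact Or.inl this
              · exact Or.inr hwu
            · rintro (rfl | hw)
              · exact ⟨Or.inl hsy'.2, hsy'.1.2⟩
              · rw [Set.mem_singleton_iff] at hw
                subst hw
                exact ⟨Or.inr rfl, huy.symm⟩
          rw [heq, Set.ncard_pair (fun h => hu (by rw [← h]; exact hsy'.1.1))]
        · obtain ⟨r, s, hset, hrs, hrQ, hsQ, -⟩ :=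
            interior_nbrs hH hQ hQH hv hvx hvy
          have heq : nbrsIn G v (supp Q ∪ {u}) = {r, s} := by
            ext w
            constructor
            · rintro ⟨hwS, hadj⟩
              rcases hwS with hwQ | hwu
              · have : w ∈ nbrsIn G v H := ⟨hQH w hwQ, hadj⟩
                rwa [hset] at this
              · rw [Set.mem_singleton_iff] at hwu
                subst hwu
                rcases hnbr v hv hadj.symm with h | h
                · exact absurd h hvx
                · exact absurd h hvy
            · intro hw
              have hw' : w ∈ nbrsIn G v H := by rw [hset]; exact hw
              rcases hw with rfl | hw
              · exact ⟨Or.inl hrQ, hw'.2⟩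
              · rw [Set.mem_singleton_iff] at hw
                subst hw
                exact ⟨Or.inl hsQ, hw'.2⟩
          rw [heq, Set.ncard_pair hrs]
    · rw [Set.mem_singleton_iff] at hv
      have heq : nbrsIn G u (supp Q ∪ {u}) = {x, y} := by
        ext w
        constructor
        · rintro ⟨hwS, hadj⟩
          rcases hwS with hwQ | hwu
          · exact hnbr w hwQ hadj
          · rw [Set.mem_singleton_iff] at hwu
            subst hwu
            exact absurd hadj (G.irrefl)
        · rintro (rfl | hw)
          · exact ⟨Or.inl Q.start_mem_support, hux⟩
          · rw [Set.mem_singleton_iff] at hw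
            subst hw
            exact ⟨Or.inl Q.end_mem_support, huy⟩
      rw [hv, heq, Set.ncard_pair hxy]

lemma hole_cycle [DecidableEq V] (hH : IsHole G H) {x₀ : V} (hx₀ : x₀ ∈ H) :
    ∃ W : G.Walk x₀ x₀, W.IsCycle ∧ ∀ v, v ∈ W.support ↔ v ∈ H := by
  classical
  set Pred : ℕ → Prop := fun n => ∃ (x y : V) (P : G.Walk x y), P.IsPath ∧
    (∀ v ∈ P.support, v ∈ H) ∧ P.length = n with hPreddef
  have hbound : ∀ n, Pred n → n ≤ H.ncard := by
    rintro n ⟨x, y, P, hPp, hPH, hlen⟩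
    have h1 : P.support.toFinset.card = n + 1 := by
      rw [List.toFinset_card_of_nodup hPp.support_nodup, Walk.length_support, hlen]
    have h2 : P.support.toFinset ⊆ hH.1.toFinset := by
      intro w hw
      rw [Set.Finite.mem_toFinset]
      exact hPH w (List.mem_toFinset.mp hw)
    have h3 := Finset.card_le_card h2
    rw [h1, ← Set.ncard_eq_toFinset_card H hH.1] at h3
    omega
  have h0 : Pred 0 := by
    refine ⟨x₀, x₀, Walk.nil, Walk.IsPath.nil, ?_, rfl⟩
    intro v hv
    rw [Walk.support_nil] at hv
    rcases List.mem_singleton.mp hv with rfl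
    exact hx₀
  have hPN : Pred (Nat.findGreatest Pred H.ncard) :=
    Nat.findGreatest_spec (Nat.zero_le _) h0
  have hmax : ∀ n, Pred n → n ≤ Nat.findGreatest Pred H.ncard :=
    fun n hn => Nat.le_findGreatest (hbound n hn) hn
  obtain ⟨x, y, P, hPp, hPH, hPlen⟩ := hPN
  have hxH : x ∈ H := hPH x P.start_mem_support
  have hyH : y ∈ H := hPH y P.end_mem_support
  have hextx : ∀ w ∈ H, G.Adj w x → w ∈ P.support := by
    intro w hw hadj
    by_contra hns
    have hpred : Pred (Nat.findGreatest Pred H.ncard + 1) := by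
      refine ⟨w, y, Walk.cons hadj P, hPp.cons hns, ?_, by simp [hPlen]⟩
      intro v hv
      rw [Walk.support_cons] at hv
      rcases List.mem_cons.mp hv with rfl | hv
      · exact hw
      · exact hPH v hv
    have := hmax _ hpred
    omega
  have hexty : ∀ w ∈ H, G.Adj w y → w ∈ P.support := by
    intro w hw hadj
    by_contra hns
    have hns' : w ∉ P.reverse.support := by
      rwa [Walk.support_reverse, List.mem_reverse]
    have hpred : Pred (Nat.findGreatest Pred H.ncard + 1) := by
      refine ⟨w, x, Walk.cons hadj P.reverse, hPp.reverse.cons hns', ?_,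
        by simp [Walk.length_reverse, hPlen]⟩
      intro v hv
      rw [Walk.support_cons] at hv
      rcases List.mem_cons.mp hv with rfl | hv
      · exact hw
      · rw [Walk.support_reverse, List.mem_reverse] at hv
        exact hPH v hv
    have := hmax _ hpred
    omega
  obtain ⟨n₁, n₂, hn12, hnset⟩ := Set.ncard_eq_two.mp (hH.2.2.2 x hxH)
  have hn₁ : n₁ ∈ nbrsIn G x H := by rw [hnset]; exact Set.mem_insert _ _
  have hn₂ : n₂ ∈ nbrsIn G x H := by rw [hnset]; exact Set.mem_insert_of_mem _ rfl
  have hn₁P : n₁ ∈ P.support := hextx n₁ hn₁.1 hn₁.2.symm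
  have hn₂P : n₂ ∈ P.support := hextx n₂ hn₂.1 hn₂.2.symm
  have hn₁x : n₁ ≠ x := fun h => G.irrefl (h ▸ hn₁.2)
  have hn₂x : n₂ ≠ x := fun h => G.irrefl (h ▸ hn₂.2)
  have hN2 : 2 ≤ P.length := by
    have hsub : ({x, n₁, n₂} : Finset V) ⊆ P.support.toFinset := by
      intro w hw
      rw [List.mem_toFinset]
      rcases Finset.mem_insert.mp hw with rfl | hw
      · exact P.start_mem_support
      rcases Finset.mem_insert.mp hw with rfl | hw
      · exact hn₁P
      · rw [Finset.mem_singleton] at hw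
        subst hw
        exact hn₂P
    have hcard : ({x, n₁, n₂} : Finset V).card = 3 := by
      rw [Finset.card_insert_of_notMem (by simp [hn₁x.symm, hn₂x.symm]),
        Finset.card_insert_of_notMem (by simp [hn12]), Finset.card_singleton]
    have h4 := Finset.card_le_card hsub
    have h5 := List.toFinset_card_le P.support
    rw [hcard] at h4
    rw [Walk.length_support] at h5
    omega
  have hxy : x ≠ y := by
    intro h
    subst h
    have := nil_of_isPath_eq hPp
    omega
  have hclo : ∀ v ∈ P.support, ∀ w, w ∈ nbrsIn G v H → w ∈ P.support := by
    intro v hv w hw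
    by_contra hns
    rcases eq_or_ne v x with rfl | hvx
    · exact hns (hextx w hw.1 hw.2.symm)
    rcases eq_or_ne v y with rfl | hvy
    · exact hns (hexty w hw.1 hw.2.symm)
    obtain ⟨r, s, hset, -, hrP, hsP, -⟩ := interior_nbrs hH hPp hPH hv hvx hvy
    rw [hset] at hw
    rcases hw with rfl | hw
    · exact hns hrP
    · rw [Set.mem_singleton_iff] at hw
      subst hw
      exact hns hsP
  have hspan : ∀ w ∈ H, w ∈ P.support := by
    intro w hw
    obtain ⟨Wk⟩ := (hH.2.2.1).preconnected ⟨x, hxH⟩ ⟨w, hw⟩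
    have key : ∀ (t s : ↥H) (Q : (G.induce H).Walk t s),
        (t : V) ∈ P.support → (s : V) ∈ P.support := by
      intro t s Q
      induction Q with
      | nil => intro h; exact h
      | @cons t c _ h q ih =>
        intro ht
        refine ih ?_
        have hadj : G.Adj (t : V) (c : V) := h
        exact hclo t ht c ⟨c.2, hadj⟩
    exact key ⟨x, hxH⟩ ⟨w, hw⟩ Wk P.start_mem_support
  have hsecond : ∀ v, v ∈ P.support → v ≠ x → v ≠ y → G.Adj x v →
      ∃ (e : G.Adj x v) (D' : G.Walk v y), P = Walk.cons e D' := by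
    intro v hv hvx hvy hadj
    obtain ⟨r, s, -, -, -, -, hcons⟩ := interior_nbrs hH hPp hPH hv hvx hvy
    exact ⟨hadj, hcons hadj⟩
  have hadjxy : G.Adj x y := by
    by_cases h1 : n₁ = y
    · exact h1 ▸ hn₁.2
    by_cases h2 : n₂ = y
    · exact h2 ▸ hn₂.2
    obtain ⟨e₁, D₁, hD₁⟩ := hsecond n₁ hn₁P hn₁x h1 hn₁.2
    obtain ⟨e₂, D₂, hD₂⟩ := hsecond n₂ hn₂P hn₂x h2 hn₂.2
    exfalso
    have h3 : (Walk.cons e₁ D₁).support = (Walk.cons e₂ D₂).support := by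
      rw [← hD₁, ← hD₂]
    rw [Walk.support_cons, Walk.support_cons, D₁.support_eq_cons,
      D₂.support_eq_cons] at h3
    simp only [List.cons.injEq, true_and] at h3
    exact hn12 h3.1
  have hPne : P.length ≠ 0 := by omega
  have hcyc : (Walk.cons hadjxy.symm P).IsCycle := by
    rw [Walk.cons_isCycle_iff]
    refine ⟨hPp, ?_⟩
    intro hmem
    obtain ⟨s, e, P', hP'⟩ := exists_snd P hPne
    rw [hP', Walk.edges_cons] at hmem
    rcases List.mem_cons.mp hmem with h | h
    · rw [Sym2.eq_iff] at h
      rcases h with ⟨hyx, -⟩ | ⟨hys, -⟩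
      · exact hxy hyx.symm
      · have hP'path : P'.IsPath := by
          rw [hP'] at hPp
          exact hPp.of_cons
        subst hys
        have h0 := nil_of_isPath_eq hP'path
        have hlen1 : P.length = 1 := by rw [hP', Walk.length_cons, h0]
        omega
    · have hxs : x ∈ P'.support := Walk.snd_mem_support_of_mem_edges P' h
      rw [hP'] at hPp
      exact ((Walk.cons_isPath_iff _ _).mp hPp).2 hxs
  have hcmem : ∀ v, v ∈ (Walk.cons hadjxy.symm P).support ↔ v ∈ P.support := by
    intro v
    rw [Walk.support_cons]
    constructor
    · intro hv
      rcases List.mem_cons.mp hv with rfl | hv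
      · exact P.end_mem_support
      · exact hv
    · intro hv
      exact List.mem_cons_of_mem _ hv
  have hx₀c : x₀ ∈ (Walk.cons hadjxy.symm P).support := (hcmem x₀).mpr (hspan x₀ hx₀)
  refine ⟨(Walk.cons hadjxy.symm P).rotate x₀ hx₀c, hcyc.rotate hx₀c, ?_⟩
  intro v
  have hperm := (Walk.support_rotate (Walk.cons hadjxy.symm P) x₀ hx₀c).perm
  have htailc : (Walk.cons hadjxy.symm P).support.tail = P.support := by
    rw [Walk.support_cons]
    rfl
  rw [htailc] at hperm
  rw [Walk.support_eq_cons]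
  constructor
  · intro hv
    rcases List.mem_cons.mp hv with rfl | hv
    · exact hx₀
    · exact hPH v (hperm.mem_iff.mp hv)
  · intro hv
    exact List.mem_cons_of_mem _ (hperm.mem_iff.mpr (hspan v hv))

lemma theta_case [DecidableEq V] (hT : ¬ HasTheta G) (hH : IsHole G H) {u a b : V}
    (hu : u ∉ H) (hab : nbrsIn G u H = {a, b}) (hne : a ≠ b) (hnadj : ¬ G.Adj a b) :
    False := by
  have haN : a ∈ nbrsIn G u H := by rw [hab]; exact Set.mem_insert _ _
  have hbN : b ∈ nbrsIn G u H := by rw [hab]; exact Set.mem_insert_of_mem _ rfl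
  have haH := haN.1
  have hua := haN.2
  have hbH := hbN.1
  have hub := hbN.2
  have hau : a ≠ u := fun h => hu (h ▸ haH)
  have hbu : b ≠ u := fun h => hu (h ▸ hbH)
  obtain ⟨W, hWc, hWmem⟩ := hole_cycle hH haH
  have hbW : b ∈ W.support := (hWmem b).mpr hbH
  obtain ⟨hP1p, hQp, hint, hmem⟩ := cycle_split hWc hbW hne.symm
  set P₁ := W.takeUntil b hbW with hP₁def
  set Q := W.dropUntil b hbW with hQdef
  have hP1H : ∀ w ∈ P₁.support, w ∈ H :=
    fun w hw => (hWmem w).mp ((hmem w).mpr (Or.inl hw))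
  have hQH : ∀ w ∈ Q.support, w ∈ H :=
    fun w hw => (hWmem w).mp ((hmem w).mpr (Or.inr hw))
  have hP1len : 2 ≤ P₁.length := two_le_length _ hne hnadj
  have hQlen : 2 ≤ Q.length := two_le_length _ hne.symm (fun h => hnadj h.symm)
  have hP2p : Q.reverse.IsPath := hQp.reverse
  have hP2len : 2 ≤ Q.reverse.length := by rwa [Walk.length_reverse]
  have hsuppP₂ : ∀ v, v ∈ Q.reverse.support ↔ v ∈ Q.support := by
    intro v
    rw [Walk.support_reverse, List.mem_reverse]
  have hP2H : ∀ w ∈ Q.reverse.support, w ∈ H :=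
    fun w hw => hQH w ((hsuppP₂ w).mp hw)
  -- second vertices
  obtain ⟨s₁, has₁, hs₁P, hs₁a, hs₁b⟩ := snd_props hP1p hP1len
  obtain ⟨t, hat, htP2, hta, htb⟩ := snd_props hP2p hP2len
  have htQ : t ∈ Q.support := (hsuppP₂ t).mp htP2
  have hrev1len : 2 ≤ P₁.reverse.length := by rwa [Walk.length_reverse]
  obtain ⟨r, hbr, hrP1rev, hrb, hra⟩ := snd_props hP1p.reverse hrev1len
  have hrP1 : r ∈ P₁.support := by
    rwa [Walk.support_reverse, List.mem_reverse] at hrP1rev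
  obtain ⟨w, hbw, hwQ, hwb, hwa⟩ := snd_props hQp hQlen
  -- distinctness
  have hs₁t : s₁ ≠ t := by
    intro h
    subst h
    rcases hint s₁ hs₁P htQ with h | h
    · exact hs₁a h
    · exact hs₁b h
  have hrw : r ≠ w := by
    intro h
    subst h
    rcases hint r hrP1 hwQ with h | h
    · exact hra h
    · exact hrb h
  have hanbrs : nbrsIn G a H = {s₁, t} :=
    nbrs_pair hH haH ⟨hP1H s₁ hs₁P, has₁⟩ ⟨hQH t htQ, hat⟩ hs₁t
  have hbnbrs : nbrsIn G b H = {r, w} :=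
    nbrs_pair hH hbH ⟨hP1H r hrP1, hbr⟩ ⟨hQH w hwQ, hbw⟩ hrw
  -- singleton intersections
  have hsxP₁ : nbrsIn G a H ∩ supp P₁ = {s₁} := by
    ext z
    constructor
    · rintro ⟨hz1, hz2⟩
      rw [hanbrs] at hz1
      rcases hz1 with rfl | hz1
      · rfl
      · rw [Set.mem_singleton_iff] at hz1
        subst hz1
        rcases hint z hz2 htQ with h | h
        · exact absurd h hta
        · exact absurd h htb
    · rintro rfl
      exact ⟨by rw [hanbrs]; exact Set.mem_insert _ _, hs₁P⟩
  have hsyP₁ : nbrsIn G b H ∩ supp P₁ = {r} := by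
    ext z
    constructor
    · rintro ⟨hz1, hz2⟩
      rw [hbnbrs] at hz1
      rcases hz1 with rfl | hz1
      · rfl
      · rw [Set.mem_singleton_iff] at hz1
        subst hz1
        rcases hint z hz2 hwQ with h | h
        · exact absurd h hwa
        · exact absurd h hwb
    · rintro rfl
      exact ⟨by rw [hbnbrs]; exact Set.mem_insert _ _, hrP1⟩
  have hsxP₂ : nbrsIn G a H ∩ supp Q.reverse = {t} := by
    ext z
    constructor
    · rintro ⟨hz1, hz2⟩
      rw [hanbrs] at hz1
      have hz2' : z ∈ Q.support := (hsuppP₂ z).mp hz2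
      rcases hz1 with rfl | hz1
      · rcases hint z hs₁P hz2' with h | h
        · exact absurd h hs₁a
        · exact absurd h hs₁b
      · exact hz1
    · intro hz
      rw [Set.mem_singleton_iff] at hz
      rw [hz]
      exact ⟨by rw [hanbrs]; exact Set.mem_insert_of_mem _ rfl, (hsuppP₂ t).mpr htQ⟩
  have hsyP₂ : nbrsIn G b H ∩ supp Q.reverse = {w} := by
    ext z
    constructor
    · rintro ⟨hz1, hz2⟩
      rw [hbnbrs] at hz1
      have hz2' : z ∈ Q.support := (hsuppP₂ z).mp hz2
      rcases hz1 with rfl | hz1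
      · rcases hint z hrP1 hz2' with h | h
        · exact absurd h hra
        · exact absurd h hrb
      · exact hz1
    · intro hz
      rw [Set.mem_singleton_iff] at hz
      rw [hz]
      exact ⟨by rw [hbnbrs]; exact Set.mem_insert_of_mem _ rfl, (hsuppP₂ w).mpr hwQ⟩
  have hnbrP₁ : ∀ w' ∈ P₁.support, G.Adj u w' → w' = a ∨ w' = b := by
    intro w' hw' hadj
    have : w' ∈ nbrsIn G u H := ⟨hP1H w' hw', hadj⟩
    rw [hab] at this
    rcases this with h | h
    · exact Or.inl h
    · exact Or.inr h
  have hnbrP₂ : ∀ w' ∈ Q.reverse.support, G.Adj u w' → w' = a ∨ w' = b := by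
    intro w' hw' hadj
    have : w' ∈ nbrsIn G u H := ⟨hP2H w' hw', hadj⟩
    rw [hab] at this
    rcases this with h | h
    · exact Or.inl h
    · exact Or.inr h
  have hole2 := arc_hole hH hu hP1p hP1H hP1len hua hub hnbrP₁ hsxP₁ hsyP₁
  have hole3 := arc_hole hH hu hP2p hP2H hP2len hua hub hnbrP₂ hsxP₂ hsyP₂
  -- the path through u
  have hP3p : (Walk.cons hua.symm (Walk.cons hub Walk.nil)).IsPath := by
    rw [Walk.cons_isPath_iff]
    constructor
    · rw [Walk.cons_isPath_iff]
      refine ⟨Walk.IsPath.nil, ?_⟩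
      rw [Walk.support_nil, List.mem_singleton]
      exact fun h => hbu h.symm
    · rw [Walk.support_cons, Walk.support_nil]
      intro hmem'
      rcases List.mem_cons.mp hmem' with h | h
      · exact hau h
      · rw [List.mem_singleton] at h
        exact hne h
  have hP3supp : (Walk.cons hua.symm (Walk.cons hub Walk.nil)).support = [a, u, b] := by
    rw [Walk.support_cons, Walk.support_cons, Walk.support_nil]
  have hunion12 : supp P₁ ∪ supp Q.reverse = H := by
    ext v
    constructor
    · rintro (hv | hv)
      · exact hP1H v hv
      · exact hP2H v hv
    · intro hv
      rcases (hmem v).mp ((hWmem v).mpr hv) with h | h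
      · exact Or.inl h
      · exact Or.inr ((hsuppP₂ v).mpr h)
  have hunion13 : supp P₁ ∪ supp (Walk.cons hua.symm (Walk.cons hub Walk.nil)) =
      supp P₁ ∪ {u} := by
    ext v
    constructor
    · rintro (hv | hv)
      · exact Or.inl hv
      · have hv' : v ∈ (Walk.cons hua.symm (Walk.cons hub Walk.nil)).support := hv
        rw [hP3supp] at hv'
        have : v ∈ [a, u, b] := hv'
        rcases List.mem_cons.mp this with rfl | this
        · exact Or.inl P₁.start_mem_support
        rcases List.mem_cons.mp this with rfl | this
        · exact Or.inr rfl
        · rw [List.mem_singleton] at this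
          subst this
          exact Or.inl P₁.end_mem_support
    · rintro (hv | hv)
      · exact Or.inl hv
      · rw [Set.mem_singleton_iff] at hv
        subst hv
        refine Or.inr ?_
        show v ∈ (Walk.cons hua.symm (Walk.cons hub Walk.nil)).support
        rw [hP3supp]
        simp
  have hunion23 : supp Q.reverse ∪ supp (Walk.cons hua.symm (Walk.cons hub Walk.nil)) =
      supp Q.reverse ∪ {u} := by
    ext v
    constructor
    · rintro (hv | hv)
      · exact Or.inl hv
      · have hv' : v ∈ (Walk.cons hua.symm (Walk.cons hub Walk.nil)).support := hv
        rw [hP3supp] at hv'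
        have : v ∈ [a, u, b] := hv'
        rcases List.mem_cons.mp this with rfl | this
        · exact Or.inl ((hsuppP₂ v).mpr Q.end_mem_support)
        rcases List.mem_cons.mp this with rfl | this
        · exact Or.inr rfl
        · rw [List.mem_singleton] at this
          subst this
          exact Or.inl ((hsuppP₂ v).mpr Q.start_mem_support)
    · rintro (hv | hv)
      · exact Or.inl hv
      · rw [Set.mem_singleton_iff] at hv
        subst hv
        refine Or.inr ?_
        show v ∈ (Walk.cons hua.symm (Walk.cons hub Walk.nil)).support
        rw [hP3supp]
        simp
  refine hT ⟨a, b, P₁, Q.reverse, Walk.cons hua.symm (Walk.cons hub Walk.nil),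
    hne, hnadj, hP1p, hP2p, hP3p, hP1len, hP2len, by simp, ?_, ?_, ?_, ?_, ?_, ?_⟩
  · intro v hv1 hv2
    exact hint v hv1 ((hsuppP₂ v).mp hv2)
  · intro v hv1 hv2
    rw [hP3supp] at hv2
    rcases List.mem_cons.mp hv2 with rfl | hv2
    · exact Or.inl rfl
    rcases List.mem_cons.mp hv2 with rfl | hv2
    · exact absurd (hP1H v hv1) hu
    · rw [List.mem_singleton] at hv2
      exact Or.inr hv2
  · intro v hv1 hv2
    rw [hP3supp] at hv2
    rcases List.mem_cons.mp hv2 with rfl | hv2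
    · exact Or.inl rfl
    rcases List.mem_cons.mp hv2 with rfl | hv2
    · exact absurd (hP2H v hv1) hu
    · rw [List.mem_singleton] at hv2
      exact Or.inr hv2
  · rw [hunion12]
    exact hH
  · rw [hunion13]
    exact hole2
  · rw [hunion23]
    exact hole3

lemma pyramid_core [DecidableEq V] (hPy : ¬ HasPyramid G) (hH : IsHole G H) {u a b c : V}
    (hu : u ∉ H) (habc : nbrsIn G u H = {a, b, c})
    (hab : G.Adj a b) (hac : ¬ G.Adj a c) (hbc : ¬ G.Adj b c)
    (hane : a ≠ c) (hbne : b ≠ c) (hnab : a ≠ b)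
    {P : G.Walk c a} {D : G.Walk a c} (hPp : P.IsPath) (hDp : D.IsPath)
    (hint : ∀ v, v ∈ P.support → v ∈ D.support → v = c ∨ v = a)
    (hmem : ∀ v, v ∈ H ↔ v ∈ P.support ∨ v ∈ D.support)
    (hbD : b ∈ D.support) : False := by
  have haN : a ∈ nbrsIn G u H := by rw [habc]; exact Set.mem_insert _ _
  have hbN : b ∈ nbrsIn G u H := by
    rw [habc]; exact Set.mem_insert_of_mem _ (Set.mem_insert _ _)
  have hcN : c ∈ nbrsIn G u H := by
    rw [habc]; exact Set.mem_insert_of_mem _ (Set.mem_insert_of_mem _ rfl)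
  have haH := haN.1
  have hua := haN.2
  have hbH := hbN.1
  have hub := hbN.2
  have hcH := hcN.1
  have huc := hcN.2
  have hcu : c ≠ u := fun h => hu (h ▸ hcH)
  have hPH : ∀ w ∈ P.support, w ∈ H := fun w hw => (hmem w).mpr (Or.inl hw)
  have hDH : ∀ w ∈ D.support, w ∈ H := fun w hw => (hmem w).mpr (Or.inr hw)
  have hbP : b ∉ P.support := by
    intro hbP
    rcases hint b hbP hbD with h | h
    · exact hbne h
    · exact hnab h.symm
  obtain ⟨r0, s0, -, -, -, -, hcons⟩ :=
    interior_nbrs hH hDp hDH hbD (Ne.symm hnab) hbne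
  obtain ⟨D', hDeq⟩ := hcons hab
  have hD'p : D'.IsPath := by
    rw [hDeq] at hDp
    exact hDp.of_cons
  have haD' : a ∉ D'.support := by
    rw [hDeq, Walk.cons_isPath_iff] at hDp
    exact hDp.2
  have hD'sub : ∀ w ∈ D'.support, w ∈ D.support := by
    intro w hw
    rw [hDeq, Walk.support_cons]
    exact List.mem_cons_of_mem _ hw
  have hD'H : ∀ w ∈ D'.support, w ∈ H := fun w hw => hDH w (hD'sub w hw)
  have hPlen : 2 ≤ P.length := two_le_length P (Ne.symm hane) (fun h => hac h.symm)
  have hD'len : 2 ≤ D'.length := two_le_length D' hbne hbc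
  have hQ2p : D'.reverse.IsPath := hD'p.reverse
  have hQ2len : 2 ≤ D'.reverse.length := by rwa [Walk.length_reverse]
  have hsuppQ2 : ∀ v, v ∈ D'.reverse.support ↔ v ∈ D'.support := by
    intro v
    rw [Walk.support_reverse, List.mem_reverse]
  have hQ2H : ∀ w ∈ D'.reverse.support, w ∈ H :=
    fun w hw => hD'H w ((hsuppQ2 w).mp hw)
  have hmem' : ∀ v, v ∈ H ↔ v ∈ P.support ∨ v ∈ D'.support := by
    intro v
    constructor
    · intro hv
      rcases (hmem v).mp hv with h | h
      · exact Or.inl h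
      · rw [hDeq, Walk.support_cons] at h
        rcases List.mem_cons.mp h with rfl | h
        · exact Or.inl P.end_mem_support
        · exact Or.inr h
    · rintro (h | h)
      · exact hPH v h
      · exact hD'H v h
  have hint' : ∀ v, v ∈ P.support → v ∈ D'.support → v = c := by
    intro v hv1 hv2
    rcases hint v hv1 (hD'sub v hv2) with h | h
    · exact h
    · subst h
      exact absurd hv2 haD'
  -- second vertices
  obtain ⟨s₁, hcs₁, hs₁P, hs₁c, hs₁a⟩ := snd_props hPp hPlen
  obtain ⟨t₁, hct₁, ht₁Q2, ht₁c, ht₁b⟩ := snd_props hQ2p hQ2len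
  have ht₁D' : t₁ ∈ D'.support := (hsuppQ2 t₁).mp ht₁Q2
  have hPrevlen : 2 ≤ P.reverse.length := by rwa [Walk.length_reverse]
  obtain ⟨r₁, har₁, hr₁Prev, hr₁a, hr₁c⟩ := snd_props hPp.reverse hPrevlen
  have hr₁P : r₁ ∈ P.support := by
    rwa [Walk.support_reverse, List.mem_reverse] at hr₁Prev
  obtain ⟨w₁, hbw₁, hw₁D', hw₁b, hw₁c⟩ := snd_props hD'p hD'len
  have hs₁t₁ : s₁ ≠ t₁ := by
    intro h
    subst h
    exact hs₁c (hint' s₁ hs₁P ht₁D')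
  have hr₁b : r₁ ≠ b := fun h => hbP (h ▸ hr₁P)
  have haw₁ : a ≠ w₁ := fun h => haD' (h ▸ hw₁D')
  have hcnbrs : nbrsIn G c H = {s₁, t₁} :=
    nbrs_pair hH hcH ⟨hPH s₁ hs₁P, hcs₁⟩ ⟨hD'H t₁ ht₁D', hct₁⟩ hs₁t₁
  have hanbrs : nbrsIn G a H = {r₁, b} :=
    nbrs_pair hH haH ⟨hPH r₁ hr₁P, har₁⟩ ⟨hbH, hab⟩ hr₁b
  have hbnbrs : nbrsIn G b H = {w₁, a} :=
    nbrs_pair hH hbH ⟨hD'H w₁ hw₁D', hbw₁⟩ ⟨haH, hab.symm⟩ (Ne.symm haw₁)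
  -- singleton intersections
  have hsP_c : nbrsIn G c H ∩ supp P = {s₁} := by
    ext z
    constructor
    · rintro ⟨hz1, hz2⟩
      rw [hcnbrs] at hz1
      rcases hz1 with rfl | hz1
      · rfl
      · rw [Set.mem_singleton_iff] at hz1
        rw [hz1]
        rw [hz1] at hz2
        exact absurd (hint' t₁ hz2 ht₁D') ht₁c
    · intro hz
      rw [Set.mem_singleton_iff] at hz
      rw [hz]
      exact ⟨by rw [hcnbrs]; exact Set.mem_insert _ _, hs₁P⟩
  have hsP_a : nbrsIn G a H ∩ supp P = {r₁} := by
    ext z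
    constructor
    · rintro ⟨hz1, hz2⟩
      rw [hanbrs] at hz1
      rcases hz1 with rfl | hz1
      · rfl
      · rw [Set.mem_singleton_iff] at hz1
        rw [hz1] at hz2
        exact absurd hz2 hbP
    · intro hz
      rw [Set.mem_singleton_iff] at hz
      rw [hz]
      exact ⟨by rw [hanbrs]; exact Set.mem_insert _ _, hr₁P⟩
  have hsQ_c : nbrsIn G c H ∩ supp D'.reverse = {t₁} := by
    ext z
    constructor
    · rintro ⟨hz1, hz2⟩
      rw [hcnbrs] at hz1
      have hz2' : z ∈ D'.support := (hsuppQ2 z).mp hz2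
      rcases hz1 with rfl | hz1
      · exact absurd (hint' z hs₁P hz2') hs₁c
      · exact hz1
    · intro hz
      rw [Set.mem_singleton_iff] at hz
      rw [hz]
      exact ⟨by rw [hcnbrs]; exact Set.mem_insert_of_mem _ rfl, (hsuppQ2 t₁).mpr ht₁D'⟩
  have hsQ_b : nbrsIn G b H ∩ supp D'.reverse = {w₁} := by
    ext z
    constructor
    · rintro ⟨hz1, hz2⟩
      rw [hbnbrs] at hz1
      have hz2' : z ∈ D'.support := (hsuppQ2 z).mp hz2
      rcases hz1 with rfl | hz1
      · rfl
      · rw [Set.mem_singleton_iff] at hz1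
        rw [hz1] at hz2'
        exact absurd hz2' haD'
    · intro hz
      rw [Set.mem_singleton_iff] at hz
      rw [hz]
      exact ⟨by rw [hbnbrs]; exact Set.mem_insert _ _, (hsuppQ2 w₁).mpr hw₁D'⟩
  have hnbrP : ∀ w' ∈ P.support, G.Adj u w' → w' = c ∨ w' = a := by
    intro w' hw' hadj
    have hw'N : w' ∈ nbrsIn G u H := ⟨hPH w' hw', hadj⟩
    rw [habc] at hw'N
    rcases hw'N with rfl | hw'N
    · exact Or.inr rfl
    rcases hw'N with rfl | hw'N
    · exact absurd hw' hbP
    · rw [Set.mem_singleton_iff] at hw'N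
      exact Or.inl hw'N
  have hnbrQ : ∀ w' ∈ D'.reverse.support, G.Adj u w' → w' = c ∨ w' = b := by
    intro w' hw' hadj
    have hw'D' : w' ∈ D'.support := (hsuppQ2 w').mp hw'
    have hw'N : w' ∈ nbrsIn G u H := ⟨hD'H w' hw'D', hadj⟩
    rw [habc] at hw'N
    rcases hw'N with rfl | hw'N
    · exact absurd hw'D' haD'
    rcases hw'N with rfl | hw'N
    · exact Or.inr rfl
    · rw [Set.mem_singleton_iff] at hw'N
      exact Or.inl hw'N
  have holeP := arc_hole hH hu hPp hPH hPlen huc hua hnbrP hsP_c hsP_a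
  have holeQ := arc_hole hH hu hQ2p hQ2H hQ2len huc hub hnbrQ hsQ_c hsQ_b
  -- the edge path c - u
  have hP3p : (Walk.cons huc.symm Walk.nil).IsPath := by
    rw [Walk.cons_isPath_iff]
    refine ⟨Walk.IsPath.nil, ?_⟩
    rw [Walk.support_nil, List.mem_singleton]
    exact hcu
  have hP3supp : (Walk.cons huc.symm Walk.nil).support = [c, u] := by
    rw [Walk.support_cons, Walk.support_nil]
  have hunion12 : supp P ∪ supp D'.reverse = H := by
    ext v
    constructor
    · rintro (hv | hv)
      · exact hPH v hv
      · exact hQ2H v hv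
    · intro hv
      rcases (hmem' v).mp hv with h | h
      · exact Or.inl h
      · exact Or.inr ((hsuppQ2 v).mpr h)
  have hunion13 : supp P ∪ supp (Walk.cons huc.symm Walk.nil) = supp P ∪ {u} := by
    ext v
    constructor
    · rintro (hv | hv)
      · exact Or.inl hv
      · have hv' : v ∈ (Walk.cons huc.symm Walk.nil).support := hv
        rw [hP3supp] at hv'
        rcases List.mem_cons.mp hv' with rfl | hv'
        · exact Or.inl P.start_mem_support
        · rw [List.mem_singleton] at hv'
          subst hv'
          exact Or.inr rfl
    · rintro (hv | hv)
      · exact Or.inl hv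
      · rw [Set.mem_singleton_iff] at hv
        subst hv
        refine Or.inr ?_
        show v ∈ (Walk.cons huc.symm Walk.nil).support
        rw [hP3supp]
        simp
  have hunion23 : supp D'.reverse ∪ supp (Walk.cons huc.symm Walk.nil) =
      supp D'.reverse ∪ {u} := by
    ext v
    constructor
    · rintro (hv | hv)
      · exact Or.inl hv
      · have hv' : v ∈ (Walk.cons huc.symm Walk.nil).support := hv
        rw [hP3supp] at hv'
        rcases List.mem_cons.mp hv' with rfl | hv'
        · exact Or.inl D'.reverse.start_mem_support
        · rw [List.mem_singleton] at hv'
          subst hv'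
          exact Or.inr rfl
    · rintro (hv | hv)
      · exact Or.inl hv
      · rw [Set.mem_singleton_iff] at hv
        subst hv
        refine Or.inr ?_
        show v ∈ (Walk.cons huc.symm Walk.nil).support
        rw [hP3supp]
        simp
  refine hPy ⟨c, a, b, u, P, D'.reverse, Walk.cons huc.symm Walk.nil,
    hab, hub.symm, hua.symm, hPp, hQ2p, hP3p, ?_, ?_, ?_, ?_, ?_, ?_, ?_, ?_, ?_⟩
  · intro v hv1 hv2
    exact hint' v hv1 ((hsuppQ2 v).mp hv2)
  · intro v hv1 hv2
    have hv2' : v ∈ (Walk.cons huc.symm Walk.nil).support := hv2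
    rw [hP3supp] at hv2'
    rcases List.mem_cons.mp hv2' with rfl | hv2'
    · rfl
    · rw [List.mem_singleton] at hv2'
      subst hv2'
      exact absurd (hPH v hv1) hu
  · intro v hv1 hv2
    have hv2' : v ∈ (Walk.cons huc.symm Walk.nil).support := hv2
    rw [hP3supp] at hv2'
    rcases List.mem_cons.mp hv2' with rfl | hv2'
    · rfl
    · rw [List.mem_singleton] at hv2'
      subst hv2'
      exact absurd (hQ2H v hv1) hu
  · rintro ⟨h1, -⟩
    omega
  · rintro ⟨h1, -⟩
    omega
  · rintro ⟨h1, -⟩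
    omega
  · rw [hunion12]
    exact hH
  · rw [hunion13]
    exact holeP
  · rw [hunion23]
    exact holeQ

lemma pyramid_case [DecidableEq V] (hPy : ¬ HasPyramid G) (hH : IsHole G H) {u a b c : V}
    (hu : u ∉ H) (habc : nbrsIn G u H = {a, b, c})
    (hab : G.Adj a b) (hac : ¬ G.Adj a c) (hbc : ¬ G.Adj b c)
    (hane : a ≠ c) (hbne : b ≠ c) (hnab : a ≠ b) : False := by
  have haN : a ∈ nbrsIn G u H := by rw [habc]; exact Set.mem_insert _ _
  have hbN : b ∈ nbrsIn G u H := by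
    rw [habc]; exact Set.mem_insert_of_mem _ (Set.mem_insert _ _)
  have hcN : c ∈ nbrsIn G u H := by
    rw [habc]; exact Set.mem_insert_of_mem _ (Set.mem_insert_of_mem _ rfl)
  obtain ⟨W, hWc, hWmem⟩ := hole_cycle hH hcN.1
  have haW : a ∈ W.support := (hWmem a).mpr haN.1
  obtain ⟨hPp, hDp, hint, hmem⟩ := cycle_split hWc haW hane
  have hmem' : ∀ v, v ∈ H ↔ v ∈ (W.takeUntil a haW).support ∨
      v ∈ (W.dropUntil a haW).support := by
    intro v
    rw [← hmem v, hWmem v]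
  have hbH : b ∈ H := hbN.1
  rcases (hmem' b).mp hbH with hbP | hbD
  · -- b is on the takeUntil part; use reversed arcs
    refine pyramid_core hPy hH hu habc hab hac hbc hane hbne hnab
      (P := (W.dropUntil a haW).reverse) (D := (W.takeUntil a haW).reverse)
      hDp.reverse hPp.reverse ?_ ?_ ?_
    · intro v hv1 hv2
      rw [Walk.support_reverse, List.mem_reverse] at hv1 hv2
      exact hint v hv2 hv1
    · intro v
      rw [Walk.support_reverse, List.mem_reverse, Walk.support_reverse,
        List.mem_reverse]
      rw [hmem' v]
      tauto
    · rwa [Walk.support_reverse, List.mem_reverse]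
  · exact pyramid_core hPy hH hu habc hab hac hbc hane hbne hnab
      hPp hDp hint hmem' hbD

lemma other_nbr (hH : IsHole G H) {p : V} (hp : p ∈ H) (q : V) :
    ∃ z, z ∈ nbrsIn G p H ∧ z ≠ q := by
  obtain ⟨z₁, z₂, hz12, hzset⟩ := Set.ncard_eq_two.mp (hH.2.2.2 p hp)
  by_cases h : z₁ = q
  · refine ⟨z₂, by rw [hzset]; exact Set.mem_insert_of_mem _ rfl, ?_⟩
    rw [← h]
    exact Ne.symm hz12
  · exact ⟨z₁, by rw [hzset]; exact Set.mem_insert _ _, h⟩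

end Aux

/-- In a (theta, pyramid, prism, turtle)-free graph, every major vertex for a
hole `H` has at least four neighbors in `H`, or exactly three pairwise
nonadjacent neighbors in `H`. -/
theorem major_vertex_neighbors {V : Type*} (G : SimpleGraph V) (hG : TPPTFree G)
    (H : Set V) (hH : IsHole G H) (u : V) (hu : IsMajorFor G u H) :
    4 ≤ (nbrsIn G u H).ncard ∨
      ((nbrsIn G u H).ncard = 3 ∧
        ∀ a ∈ nbrsIn G u H, ∀ b ∈ nbrsIn G u H, a ≠ b → ¬ G.Adj a b) := by
  classical
  obtain ⟨huH, hne0, hnm⟩ := hu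
  have hNfin : (nbrsIn G u H).Finite := hH.1.subset (nbrsIn_subset' G u H)
  rcases Nat.lt_or_ge (nbrsIn G u H).ncard 4 with hlt | hge
  swap
  · exact Or.inl hge
  have hpos : 0 < (nbrsIn G u H).ncard := (Set.ncard_pos hNfin).mpr hne0
  have hcases : (nbrsIn G u H).ncard = 1 ∨ (nbrsIn G u H).ncard = 2 ∨
      (nbrsIn G u H).ncard = 3 := by omega
  rcases hcases with h1 | h2 | h3
  · -- one neighbour: u is minor
    exfalso
    obtain ⟨a, hset⟩ := Set.ncard_eq_one.mp h1
    have haN : a ∈ nbrsIn G u H := by rw [hset]; rfl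
    have haH : a ∈ H := haN.1
    obtain ⟨b, hbN, -⟩ := other_nbr hH haH a
    obtain ⟨c, hcN, hca⟩ := other_nbr hH hbN.1 a
    refine hnm ⟨huH, hne0, a, b, c, haH, hbN.1, hcN.1, hbN.2, hcN.2, Ne.symm hca, ?_⟩
    rw [hset]
    intro z hz
    rw [Set.mem_singleton_iff] at hz
    subst hz
    exact Set.mem_insert _ _
  · -- two neighbours
    exfalso
    obtain ⟨a, b, hab_ne, hset⟩ := Set.ncard_eq_two.mp h2
    have haN : a ∈ nbrsIn G u H := by rw [hset]; exact Set.mem_insert _ _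
    have hbN : b ∈ nbrsIn G u H := by rw [hset]; exact Set.mem_insert_of_mem _ rfl
    by_cases hadj : G.Adj a b
    · obtain ⟨c, hcN, hca⟩ := other_nbr hH hbN.1 a
      refine hnm ⟨huH, hne0, a, b, c, haN.1, hbN.1, hcN.1, hadj, hcN.2, Ne.symm hca, ?_⟩
      rw [hset]
      intro z hz
      rcases hz with rfl | hz
      · exact Set.mem_insert _ _
      · rw [Set.mem_singleton_iff] at hz
        subst hz
        exact Set.mem_insert_of_mem _ (Set.mem_insert _ _)
    · exact theta_case hG.1 hH huH hset hab_ne hadj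
  · -- three neighbours
    obtain ⟨a, b, c, hab', hac', hbc', hset⟩ := Set.ncard_eq_three.mp h3
    have haN : a ∈ nbrsIn G u H := by rw [hset]; exact Set.mem_insert _ _
    have hbN : b ∈ nbrsIn G u H := by
      rw [hset]; exact Set.mem_insert_of_mem _ (Set.mem_insert _ _)
    have hcN : c ∈ nbrsIn G u H := by
      rw [hset]; exact Set.mem_insert_of_mem _ (Set.mem_insert_of_mem _ rfl)
    by_cases h1 : G.Adj a b
    · exfalso
      by_cases h2 : G.Adj a c
      · refine hnm ⟨huH, hne0, b, a, c, hbN.1, haN.1, hcN.1, h1.symm, h2, hbc', ?_⟩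
        rw [hset]
        intro z hz
        simp only [Set.mem_insert_iff, Set.mem_singleton_iff] at hz ⊢
        tauto
      · by_cases h3' : G.Adj b c
        · refine hnm ⟨huH, hne0, a, b, c, haN.1, hbN.1, hcN.1, h1, h3', hac', ?_⟩
          rw [hset]
        · exact pyramid_case hG.2.1 hH huH hset h1 h2 h3' hac' hbc' hab'
    · by_cases h2 : G.Adj a c
      · exfalso
        by_cases h3' : G.Adj b c
        · refine hnm ⟨huH, hne0, a, c, b, haN.1, hcN.1, hbN.1, h2, h3'.symm, hab', ?_⟩
          rw [hset]
          intro z hz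
          simp only [Set.mem_insert_iff, Set.mem_singleton_iff] at hz ⊢
          tauto
        · have hset' : nbrsIn G u H = {a, c, b} := by
            rw [hset]
            ext z
            simp only [Set.mem_insert_iff, Set.mem_singleton_iff]
            tauto
          exact pyramid_case hG.2.1 hH huH hset' h2 h1 (fun h => h3' h.symm)
            hab' (Ne.symm hbc') hac'
      · by_cases h3' : G.Adj b c
        · exfalso
          have hset' : nbrsIn G u H = {b, c, a} := by
            rw [hset]
            ext z
            simp only [Set.mem_insert_iff, Set.mem_singleton_iff]
            tauto
          exact pyramid_case hG.2.1 hH huH hset' h3' (fun h => h1 h.symm)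
            (fun h => h2 h.symm) (Ne.symm hab') (Ne.symm hac') hbc'
        · refine Or.inr ⟨h3, ?_⟩
          intro p hp q hq hpq hadj
          rw [hset] at hp hq
          simp only [Set.mem_insert_iff, Set.mem_singleton_iff] at hp hq
          rcases hp with rfl | rfl | rfl <;> rcases hq with rfl | rfl | rfl
          · exact hpq rfl
          · exact h1 hadj
          · exact h2 hadj
          · exact h1 hadj.symm
          · exact hpq rfl
          · exact h3' hadj
          · exact h2 hadj.symm
          · exact h3' hadj.symm
          · exact hpq rfl


end Paper
end
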